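/- arXiv:2603.16540 — 4 statements merged into one kernel-verified Lean document; each statement's English description precedes it below -/
import Mathlib

section
/- Let A ∈ End(ℝ²). There exists a basis of ℝ² with respect to which the matrix of A has at most one nonzero entry in each row and each column if and only if A is diagonalizable over ℝ, or A² is diagonalizable over ℝ with a single eigenvalue (i.e., A² is a real scalar multiple of the identity). -/
/-- If `b` is an eigenbasis of `A`, the LHS of the theorem holds. -/
lemma eig_basis_good (A : Matrix (Fin 2) (Fin 2) ℝ) (b : Module.Basis (Fin 2) ℝ (Fin 2 → ℝ))
    (μ : Fin 2 → ℝ) (hb : ∀ i, A.mulVec (b i) = μ i • b i) :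
    (∃ b : Module.Basis (Fin 2) ℝ (Fin 2 → ℝ),
      (∀ i j k : Fin 2, LinearMap.toMatrix b b (Matrix.toLin' A) i j ≠ 0 →
        LinearMap.toMatrix b b (Matrix.toLin' A) i k ≠ 0 → j = k) ∧
      (∀ i j k : Fin 2, LinearMap.toMatrix b b (Matrix.toLin' A) i k ≠ 0 →
        LinearMap.toMatrix b b (Matrix.toLin' A) j k ≠ 0 → i = j)) := by
  have key : ∀ i j, LinearMap.toMatrix b b (Matrix.toLin' A) i j ≠ 0 → i = j := by
    intro i j h
    by_contra hij
    apply h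
    rw [LinearMap.toMatrix_apply, Matrix.toLin'_apply, hb j, map_smul]
    simp [Module.Basis.repr_self, Finsupp.single_apply, Ne.symm hij]
  exact ⟨b, fun i j k hj hk => (key i j hj).symm.trans (key i k hk),
    fun i j k hi hj => (key i k hi).trans (key j k hj).symm⟩

/-- If `A` is antidiagonal in some basis, then `A² = λ•1`. -/
lemma antidiag_sq (A : Matrix (Fin 2) (Fin 2) ℝ) (b : Module.Basis (Fin 2) ℝ (Fin 2 → ℝ))
    (h00 : LinearMap.toMatrix b b (Matrix.toLin' A) 0 0 = 0)
    (h11 : LinearMap.toMatrix b b (Matrix.toLin' A) 1 1 = 0) :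
    ∃ lam : ℝ, A ^ 2 = lam • (1 : Matrix (Fin 2) (Fin 2) ℝ) := by
  set M := LinearMap.toMatrix b b (Matrix.toLin' A) with hM
  refine ⟨M 0 1 * M 1 0, ?_⟩
  have hMsq : M * M = (M 0 1 * M 1 0) • 1 := by
    ext i j
    fin_cases i <;> fin_cases j <;>
      simp [Matrix.mul_apply, Fin.sum_univ_two, h00, h11, Matrix.one_apply, mul_comm]
  have hA : Matrix.toLin b b M = Matrix.toLin' A := Matrix.toLin_toMatrix b b _
  apply Matrix.toLin'.injective
  have h1 : Matrix.toLin' (A ^ 2) = (Matrix.toLin' A).comp (Matrix.toLin' A) := by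
    rw [pow_two, Matrix.toLin'_mul]
  have h2 : (Matrix.toLin' A).comp (Matrix.toLin' A) = Matrix.toLin b b (M * M) := by
    rw [Matrix.toLin_mul b b b, hA]
  rw [h1, h2, hMsq, map_smul, map_smul, Matrix.toLin_one, Matrix.toLin'_one]

/-- A real 2×2 matrix A admits a basis of ℝ² in which its matrix has at most one
nonzero entry in each row and column iff A is diagonalizable over ℝ or
`A² = λ•Id` for some real λ. -/
theorem stmt_8 (A : Matrix (Fin 2) (Fin 2) ℝ) :
    (∃ b : Module.Basis (Fin 2) ℝ (Fin 2 → ℝ),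
      (∀ i j k : Fin 2, LinearMap.toMatrix b b (Matrix.toLin' A) i j ≠ 0 →
        LinearMap.toMatrix b b (Matrix.toLin' A) i k ≠ 0 → j = k) ∧
      (∀ i j k : Fin 2, LinearMap.toMatrix b b (Matrix.toLin' A) i k ≠ 0 →
        LinearMap.toMatrix b b (Matrix.toLin' A) j k ≠ 0 → i = j)) ↔
    ((∃ (b : Module.Basis (Fin 2) ℝ (Fin 2 → ℝ)) (μ : Fin 2 → ℝ),
        ∀ i, A.mulVec (b i) = μ i • b i) ∨
      (∃ lam : ℝ, A ^ 2 = lam • (1 : Matrix (Fin 2) (Fin 2) ℝ))) := by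
  constructor
  · rintro ⟨b, hrow, hcol⟩
    set M := LinearMap.toMatrix b b (Matrix.toLin' A) with hM
    have hApply : ∀ j, A.mulVec (b j) = M 0 j • b 0 + M 1 j • b 1 := by
      intro j
      have h1 : Matrix.toLin' A (b j) = A.mulVec (b j) := Matrix.toLin'_apply A (b j)
      have h2 := b.sum_repr (Matrix.toLin' A (b j))
      rw [Fin.sum_univ_two] at h2
      rw [← h1, ← h2]
      simp [hM, LinearMap.toMatrix_apply]
    by_cases h01 : M 0 1 = 0
    · by_cases h10 : M 1 0 = 0
      · left
        refine ⟨b, fun i => M i i, fun i => ?_⟩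
        fin_cases i <;> rw [hApply] <;> simp [h01, h10]
      · have h00 : M 0 0 = 0 := by
          by_contra h
          exact absurd (hcol 0 1 0 h h10) (by decide)
        have h11 : M 1 1 = 0 := by
          by_contra h
          exact absurd (hrow 1 0 1 h10 h) (by decide)
        exact Or.inr (antidiag_sq A b h00 h11)
    · have h00 : M 0 0 = 0 := by
        by_contra h
        exact absurd (hrow 0 0 1 h h01) (by decide)
      have h11 : M 1 1 = 0 := by
        by_contra h
        exact absurd (hcol 0 1 1 h01 h) (by decide)
      exact Or.inr (antidiag_sq A b h00 h11)
  · rintro (⟨b, μ, hb⟩ | ⟨lam, hlam⟩)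
    · exact eig_basis_good A b μ hb
    · by_cases hsc : A 1 0 = 0 ∧ A 0 1 = 0 ∧ A 0 0 = A 1 1
      · -- A is scalar; standard basis is an eigenbasis
        refine eig_basis_good A (Pi.basisFun ℝ (Fin 2)) (fun _ => A 0 0) (fun i => ?_)
        obtain ⟨h1, h2, h3⟩ := hsc
        funext k
        fin_cases i <;> fin_cases k <;>
          simp [Matrix.mulVec, dotProduct, Fin.sum_univ_two, Pi.single_apply,
            h1, h2, ← h3]
      · -- find v with (v, Av) linearly independent
        obtain ⟨v, hv⟩ : ∃ v : Fin 2 → ℝ,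
            v 0 * (A.mulVec v) 1 - v 1 * (A.mulVec v) 0 ≠ 0 := by
          push_neg at hsc
          by_cases h10 : A 1 0 = 0
          · by_cases h01 : A 0 1 = 0
            · have hne := hsc h10 h01
              refine ⟨fun _ => 1, fun h => hne ?_⟩
              simp [Matrix.mulVec, dotProduct, Fin.sum_univ_two, h10, h01] at h
              linarith
            · refine ⟨Pi.single 1 1, fun h => h01 ?_⟩
              simp [Matrix.mulVec, dotProduct, Fin.sum_univ_two, Pi.single_apply] at h
              linarith
          · refine ⟨Pi.single 0 1, fun h => h10 ?_⟩
            simp [Matrix.mulVec, dotProduct, Fin.sum_univ_two, Pi.single_apply] at h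
            linarith
        set w := A.mulVec v with hw
        have hLI : LinearIndependent ℝ ![v, w] := by
          rw [LinearIndependent.pair_iff]
          intro s t hst
          have e0 := congrFun hst 0
          have e1 := congrFun hst 1
          simp [Matrix.cons_val_zero, Matrix.cons_val_one] at e0 e1
          constructor
          · have : s * (v 0 * w 1 - v 1 * w 0) = 0 := by linear_combination w 1 * e0 - w 0 * e1
            rcases mul_eq_zero.mp this with h | h
            · exact h
            · exact absurd h hv
          · have : t * (v 0 * w 1 - v 1 * w 0) = 0 := by linear_combination v 0 * e1 - v 1 * e0
            rcases mul_eq_zero.mp this with h | h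
            · exact h
            · exact absurd h hv
        have hcard : Fintype.card (Fin 2) = Module.finrank ℝ (Fin 2 → ℝ) := by simp
        set b := basisOfLinearIndependentOfCardEqFinrank hLI hcard with hbdef
        have hb0 : b 0 = v := by
          rw [hbdef, coe_basisOfLinearIndependentOfCardEqFinrank]; rfl
        have hb1 : b 1 = w := by
          rw [hbdef, coe_basisOfLinearIndependentOfCardEqFinrank]; rfl
        set M := LinearMap.toMatrix b b (Matrix.toLin' A) with hM
        have hMapp : ∀ i j, M i j = b.repr (A.mulVec (b j)) i := by
          intro i j
          rw [hM, LinearMap.toMatrix_apply, Matrix.toLin'_apply]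
        have hcol0 : ∀ i, M i 0 = (Finsupp.single (1 : Fin 2) (1:ℝ)) i := by
          intro i
          rw [hMapp, hb0, ← hw, ← hb1, b.repr_self]
        have hcol1 : ∀ i, M i 1 = (lam • Finsupp.single (0 : Fin 2) (1:ℝ)) i := by
          intro i
          have hAw : A.mulVec w = lam • v := by
            rw [hw, Matrix.mulVec_mulVec, ← pow_two, hlam, Matrix.smul_mulVec,
              Matrix.one_mulVec]
          rw [hMapp, hb1, hAw, map_smul, ← hb0, b.repr_self]
        have h00 : M 0 0 = 0 := by rw [hcol0]; simp
        have h10 : M 1 0 = 1 := by rw [hcol0]; simp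
        have h11 : M 1 1 = 0 := by rw [hcol1]; simp
        have h01 : M 0 1 = lam := by rw [hcol1]; simp
        refine ⟨b, fun i j k hj hk => ?_, fun i j k hi hj => ?_⟩
        · fin_cases i <;> fin_cases j <;> fin_cases k <;>
            first
              | rfl
              | exact absurd h00 hj
              | exact absurd h00 hk
              | exact absurd h11 hj
              | exact absurd h11 hk
        · fin_cases i <;> fin_cases j <;> fin_cases k <;>
            first
              | rfl
              | exact absurd h00 hi
              | exact absurd h00 hj
              | exact absurd h11 hi
              | exact absurd h11 hj
end

section
/- For every n ≥ 2, the polynomial x^{2^{n−1}} − 1 ∈ ℝ[x] has exactly n factorizations (up to reordering) into monic factors of the form x^d − r with d ∈ ℕ₊ and r ∈ ℝ \ {0}, namely the factorizations obtained by successively splitting x^{2^k} − 1 = (x^{2^{k−1}} − 1)(x^{2^{k−1}} + 1) and never splitting any factor x^{2^j} + 1. -/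
open Polynomial

private lemma aeval_root {d N : ℕ} {r : ℝ} (z : ℂ) (hz : z ^ d = (r : ℂ))
    (hdvd : (X ^ d - C r : ℝ[X]) ∣ X ^ N - 1) : z ^ N = 1 := by
  have h := map_dvd (aeval z) hdvd
  simp only [map_sub, map_pow, aeval_X, aeval_C, map_one, Complex.coe_algebraMap] at h
  rw [hz, sub_self, zero_dvd_iff, sub_eq_zero] at h
  exact h

private lemma factor_shape {d N : ℕ} {r : ℝ} (hd : 1 ≤ d) (_hr : r ≠ 0) (hN : N ≠ 0)
    (hdvd : (X ^ d - C r : ℝ[X]) ∣ X ^ N - 1) :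
    (r = 1 ∨ r = -1) ∧ d ∣ N := by
  obtain ⟨z, hz⟩ := IsAlgClosed.exists_pow_nat_eq (r : ℂ) (n := d) (by omega)
  have hzN : z ^ N = 1 := aeval_root z hz hdvd
  have hdne : d ≠ 0 := by omega
  set ζ := Complex.exp (2 * Real.pi * Complex.I / d) with hζdef
  have hζ : IsPrimitiveRoot ζ d := Complex.isPrimitiveRoot_exp d hdne
  have h2 : (z * ζ) ^ d = (r : ℂ) := by rw [mul_pow, hz, hζ.pow_eq_one, mul_one]
  have hzζN : (z * ζ) ^ N = 1 := aeval_root _ h2 hdvd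
  have hζN : ζ ^ N = 1 := by
    have h3 := hzζN
    rw [mul_pow, hzN, one_mul] at h3
    exact h3
  refine ⟨?_, hζ.dvd_of_pow_eq_one _ hζN⟩
  have hrN : (r : ℂ) ^ N = 1 := by
    rw [← hz, ← pow_mul, mul_comm d N, pow_mul, hzN, one_pow]
  have hrN' : r ^ N = 1 := by exact_mod_cast hrN
  rcases pow_eq_one_iff_cases.mp hrN' with h1 | h1 | h1
  · omega
  · exact Or.inl h1
  · exact Or.inr h1.1

private lemma prod_canonical (t : ℕ) : ∀ a : ℕ,
    (X ^ 2 ^ a - 1 : ℝ[X]) *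
      ((Multiset.range t).map fun i => (X:ℝ[X]) ^ 2 ^ (a + t - 1 - i) + 1).prod
      = X ^ 2 ^ (a + t) - 1 := by
  induction t with
  | zero => intro a; simp
  | succ t ih =>
    intro a
    rw [Multiset.range_succ, Multiset.map_cons, Multiset.prod_cons]
    have e1 : a + (t + 1) - 1 - t = a := by omega
    rw [e1, ← mul_assoc]
    have e2 : (X ^ 2 ^ a - 1 : ℝ[X]) * (X ^ 2 ^ a + 1) = X ^ 2 ^ (a + 1) - 1 := by
      have h : (X : ℝ[X]) ^ 2 ^ (a + 1) = (X ^ 2 ^ a) ^ 2 := by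
        rw [← pow_mul, pow_succ]
      rw [h]; ring
    rw [e2]
    have e3 : ((Multiset.range t).map fun i => (X:ℝ[X]) ^ 2 ^ (a + (t + 1) - 1 - i) + 1)
        = (Multiset.range t).map fun i => (X:ℝ[X]) ^ 2 ^ ((a + 1) + t - 1 - i) + 1 := by
      apply Multiset.map_congr rfl
      intro i hi
      rw [show a + (t + 1) - 1 - i = (a + 1) + t - 1 - i by omega]
    rw [e3, ih (a + 1), show a + 1 + t = a + (t + 1) by omega]

private lemma prod_plus_one (t : ℕ) : ∀ (a : ℕ) (U : Multiset ℕ),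
    (X ^ 2 ^ a - 1 : ℝ[X]) * (U.map fun j => (X:ℝ[X]) ^ 2 ^ j + 1).prod
      = X ^ 2 ^ (a + t) - 1 →
    U = (Multiset.range t).map fun i => a + t - 1 - i := by
  induction t with
  | zero =>
    intro a U h
    rw [add_zero] at h
    have hne : (X ^ 2 ^ a - 1 : ℝ[X]) ≠ 0 := by
      intro hzero
      have := congrArg (Polynomial.eval 0) hzero
      simp [zero_pow (by positivity : (2:ℕ)^a ≠ 0)] at this
    have hprod1 : (U.map fun j => (X:ℝ[X]) ^ 2 ^ j + 1).prod = 1 := by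
      have h' : (X ^ 2 ^ a - 1 : ℝ[X]) * (U.map fun j => (X:ℝ[X]) ^ 2 ^ j + 1).prod
          = (X ^ 2 ^ a - 1 : ℝ[X]) * 1 := by rw [mul_one]; exact h
      exact mul_left_cancel₀ hne h'
    simp only [Multiset.range_zero, Multiset.map_zero]
    by_contra hU
    obtain ⟨j, hj⟩ := Multiset.exists_mem_of_ne_zero hU
    obtain ⟨U', rfl⟩ : ∃ U', U = j ::ₘ U' := ⟨U.erase j, (Multiset.cons_erase hj).symm⟩
    rw [Multiset.map_cons, Multiset.prod_cons] at hprod1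
    have hunit : IsUnit ((X:ℝ[X]) ^ 2 ^ j + 1) := IsUnit.of_mul_eq_one _ hprod1
    have hdeg := Polynomial.natDegree_eq_zero_of_isUnit hunit
    have : ((X:ℝ[X]) ^ 2 ^ j + 1).natDegree = 2 ^ j := by
      simpa using Polynomial.natDegree_X_pow_add_C (n := 2 ^ j) (r := (1:ℝ))
    rw [this] at hdeg
    exact absurd hdeg (by positivity)
  | succ t ih =>
    intro a U h
    obtain ⟨ζ, hζ⟩ := IsAlgClosed.exists_pow_nat_eq (-1 : ℂ) (n := 2 ^ a) (by positivity)
    have heval : (ζ ^ 2 ^ a - 1) * (U.map fun j => ζ ^ 2 ^ j + 1).prod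
        = ζ ^ 2 ^ (a + (t + 1)) - 1 := by
      have h2 := congrArg (aeval ζ) h
      simpa [map_multiset_prod, Multiset.map_map, Function.comp] using h2
    have hζtop : ζ ^ 2 ^ (a + (t + 1)) = 1 := by
      rw [pow_add, pow_mul, hζ]
      exact Even.neg_one_pow (Nat.even_pow.mpr ⟨even_two, by omega⟩)
    rw [hζtop, hζ, sub_self] at heval
    have hzero : (U.map fun j => ζ ^ 2 ^ j + 1).prod = 0 := by
      rcases mul_eq_zero.mp heval with h' | h'
      · norm_num at h'
      · exact h'
    have hmem0 : (0 : ℂ) ∈ U.map fun j => ζ ^ 2 ^ j + 1 :=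
      Multiset.prod_eq_zero_iff.mp hzero
    obtain ⟨j, hjU, hj0⟩ := Multiset.mem_map.mp hmem0
    have hjval : ζ ^ 2 ^ j = -1 := by linear_combination hj0
    have hja : j = a := by
      rcases lt_trichotomy j a with hlt | heq | hgt
      · exfalso
        have h1 : (ζ ^ 2 ^ j) ^ 2 ^ (a - j) = ζ ^ 2 ^ a := by
          rw [← pow_mul, ← pow_add, Nat.add_sub_cancel' hlt.le]
        rw [hjval, hζ] at h1
        rw [Even.neg_one_pow (Nat.even_pow.mpr ⟨even_two, by omega⟩)] at h1
        norm_num at h1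
      · exact heq
      · exfalso
        have h1 : (ζ ^ 2 ^ a) ^ 2 ^ (j - a) = ζ ^ 2 ^ j := by
          rw [← pow_mul, ← pow_add, Nat.add_sub_cancel' hgt.le]
        rw [hjval, hζ] at h1
        rw [Even.neg_one_pow (Nat.even_pow.mpr ⟨even_two, by omega⟩)] at h1
        norm_num at h1
    subst hja
    obtain ⟨U', rfl⟩ : ∃ U', U = j ::ₘ U' := ⟨U.erase j, (Multiset.cons_erase hjU).symm⟩
    rw [Multiset.map_cons, Multiset.prod_cons, ← mul_assoc] at h
    have e2 : (X ^ 2 ^ j - 1 : ℝ[X]) * (X ^ 2 ^ j + 1) = X ^ 2 ^ (j + 1) - 1 := by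
      have hx : (X : ℝ[X]) ^ 2 ^ (j + 1) = (X ^ 2 ^ j) ^ 2 := by rw [← pow_mul, pow_succ]
      rw [hx]; ring
    rw [e2, show j + (t + 1) = (j + 1) + t by omega] at h
    have hU' := ih (j + 1) U' h
    rw [Multiset.range_succ, Multiset.map_cons, hU']
    congr 1
    · omega
    · apply Multiset.map_congr rfl
      intro i hi
      omega
/-- For n ≥ 2, the polynomial `x^(2^(n−1)) − 1 ∈ ℝ[x]` has exactly n factorizations
(as multisets of factors) into factors of the form `x^d − r` with `d ≥ 1`, `r ≠ 0`:
the t-th one (0 ≤ t < n) is `(x^(2^(n−1−t)) − 1) ∏_{j=n−1−t}^{n−2} (x^(2^j) + 1)`,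
and these n factorizations are pairwise distinct. -/
theorem stmt_12 (n : ℕ) (hn : 2 ≤ n) :
    (∀ S : Multiset (ℕ × ℝ),
      ((∀ p ∈ S, 1 ≤ p.1 ∧ p.2 ≠ 0) ∧
        (S.map fun p => (X : ℝ[X]) ^ p.1 - C p.2).prod = X ^ (2 ^ (n - 1)) - 1) ↔
      ∃ t < n, S = (2 ^ (n - 1 - t), (1 : ℝ)) ::ₘ
        ((Multiset.range t).map fun i => (2 ^ (n - 2 - i), (-1 : ℝ)))) ∧
    (∀ t₁ t₂, t₁ < n → t₂ < n →
      ((2 ^ (n - 1 - t₁), (1 : ℝ)) ::ₘ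
        ((Multiset.range t₁).map fun i => (2 ^ (n - 2 - i), (-1 : ℝ)))) =
      ((2 ^ (n - 1 - t₂), (1 : ℝ)) ::ₘ
        ((Multiset.range t₂).map fun i => (2 ^ (n - 2 - i), (-1 : ℝ)))) → t₁ = t₂) := by
  constructor
  · intro S
    constructor
    · rintro ⟨hmem, hprod⟩
      have hNne : (2 : ℕ) ^ (n - 1) ≠ 0 := by positivity
      have hdvd : ∀ p ∈ S, (X ^ p.1 - C p.2 : ℝ[X]) ∣ X ^ 2 ^ (n - 1) - 1 := by
        intro p hp
        rw [← hprod]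
        exact Multiset.dvd_prod (Multiset.mem_map_of_mem _ hp)
      have hshape : ∀ p ∈ S, (p.2 = 1 ∨ p.2 = -1) ∧ ∃ j ≤ n - 1, p.1 = 2 ^ j := by
        intro p hp
        obtain ⟨hr, hd⟩ := factor_shape (hmem p hp).1 (hmem p hp).2 hNne (hdvd p hp)
        obtain ⟨j, hj, hjd⟩ := (Nat.dvd_prime_pow Nat.prime_two).mp hd
        exact ⟨hr, j, hj, hjd⟩
      -- there is a factor with r = 1
      have h1root : ∃ p ∈ S, p.2 = 1 := by
        have hz : Polynomial.eval 1 ((S.map fun p => (X : ℝ[X]) ^ p.1 - C p.2).prod) = 0 := by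
          rw [hprod]; simp
        rw [Polynomial.eval_multiset_prod, Multiset.map_map] at hz
        have hmem0 : (0 : ℝ) ∈ S.map fun p => Polynomial.eval 1 ((X : ℝ[X]) ^ p.1 - C p.2) := by
          simpa [Function.comp] using Multiset.prod_eq_zero_iff.mp hz
        obtain ⟨p, hpS, hp⟩ := Multiset.mem_map.mp hmem0
        refine ⟨p, hpS, ?_⟩
        simp only [eval_sub, eval_pow, eval_X, eval_C, one_pow] at hp
        linarith
      obtain ⟨p, hpS, hp1⟩ := h1root
      obtain ⟨T, rfl⟩ : ∃ T, S = p ::ₘ T := ⟨S.erase p, (Multiset.cons_erase hpS).symm⟩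
      -- every other factor has r = -1
      have hsf : Squarefree (X ^ 2 ^ (n - 1) - 1 : ℝ[X]) := by
        have hsep := Polynomial.separable_X_pow_sub_C (n := 2 ^ (n - 1)) (1 : ℝ) (by positivity) one_ne_zero
        rw [map_one] at hsep
        exact hsep.squarefree
      have hT : ∀ q ∈ T, q.2 = -1 := by
        intro q hq
        rcases (hshape q (Multiset.mem_cons_of_mem hq)).1 with h1 | h1
        · exfalso
          obtain ⟨T', rfl⟩ : ∃ T', T = q ::ₘ T' := ⟨T.erase q, (Multiset.cons_erase hq).symm⟩
          rw [Multiset.map_cons, Multiset.map_cons, Multiset.prod_cons, Multiset.prod_cons]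
            at hprod
          have d1 : ((X : ℝ[X]) - 1) ∣ X ^ p.1 - C p.2 := by
            rw [hp1, map_one]
            simpa using sub_dvd_pow_sub_pow (X : ℝ[X]) 1 p.1
          have d2 : ((X : ℝ[X]) - 1) ∣ X ^ q.1 - C q.2 := by
            rw [h1, map_one]
            simpa using sub_dvd_pow_sub_pow (X : ℝ[X]) 1 q.1
          have hdvd2 : ((X : ℝ[X]) - 1) * ((X : ℝ[X]) - 1) ∣ X ^ 2 ^ (n - 1) - 1 := by
            rw [← hprod]
            exact mul_dvd_mul d1 (d2.mul_right _)
          have hunit := hsf _ hdvd2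
          have hnotunit : ¬ IsUnit ((X : ℝ[X]) - 1) := by
            have := Polynomial.not_isUnit_X_sub_C (1 : ℝ)
            rwa [map_one] at this
          exact hnotunit hunit
        · exact h1
      -- p has first component 2 ^ a
      obtain ⟨a, ha, hpa⟩ := (hshape p (Multiset.mem_cons_self p T)).2
      -- turn T into U.map
      set U : Multiset ℕ := T.map fun q => Nat.log 2 q.1 with hUdef
      have hTU : T = U.map fun j => ((2 ^ j : ℕ), (-1 : ℝ)) := by
        rw [hUdef, Multiset.map_map]
        symm
        calc T.map ((fun j => ((2 ^ j : ℕ), (-1 : ℝ))) ∘ fun q => Nat.log 2 q.1)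
            = T.map id := by
              apply Multiset.map_congr rfl
              intro q hq
              obtain ⟨j, _, hj⟩ := (hshape q (Multiset.mem_cons_of_mem hq)).2
              have : Nat.log 2 q.1 = j := by rw [hj, Nat.log_pow one_lt_two]
              simp only [Function.comp_apply, this, id_eq]
              rw [← hj, ← hT q hq]
          _ = T := Multiset.map_id T
      -- rewrite the product
      rw [Multiset.map_cons, Multiset.prod_cons] at hprod
      have hmapT : (T.map fun q => (X : ℝ[X]) ^ q.1 - C q.2)
          = U.map fun j => (X : ℝ[X]) ^ 2 ^ j + 1 := by
        rw [hTU, Multiset.map_map]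
        apply Multiset.map_congr rfl
        intro j _
        simp [sub_neg_eq_add]
      rw [hmapT, hpa, hp1, map_one] at hprod
      set t := n - 1 - a with htdef
      have hat : a + t = n - 1 := by omega
      rw [← hat] at hprod
      have hU := prod_plus_one t a U hprod
      refine ⟨t, by omega, ?_⟩
      have hpeq : p = ((2 ^ (n - 1 - t) : ℕ), (1 : ℝ)) := by
        have : n - 1 - t = a := by omega
        rw [this, ← hpa, ← hp1]
      rw [hpeq, hTU, hU, Multiset.map_map]
      congr 1
      apply Multiset.map_congr rfl
      intro i hi
      have hit : i < t := Multiset.mem_range.mp hi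
      simp only [Function.comp_apply]
      congr 2
      omega
    · rintro ⟨t, ht, rfl⟩
      constructor
      · intro p hp
        rcases Multiset.mem_cons.mp hp with rfl | hp'
        · exact ⟨Nat.one_le_two_pow, one_ne_zero⟩
        · obtain ⟨i, _, rfl⟩ := Multiset.mem_map.mp hp'
          exact ⟨Nat.one_le_two_pow, by norm_num⟩
      · rw [Multiset.map_cons, Multiset.prod_cons, Multiset.map_map]
        have hmapeq : ((Multiset.range t).map
              ((fun p => (X : ℝ[X]) ^ p.1 - C p.2) ∘ fun i => ((2 ^ (n - 2 - i) : ℕ), (-1 : ℝ))))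
            = (Multiset.range t).map fun i => (X : ℝ[X]) ^ 2 ^ ((n - 1 - t) + t - 1 - i) + 1 := by
          apply Multiset.map_congr rfl
          intro i hi
          have hit : i < t := Multiset.mem_range.mp hi
          simp only [Function.comp_apply, map_neg, map_one, sub_neg_eq_add]
          congr 3
          omega
        rw [hmapeq, map_one]
        conv_rhs => rw [show n - 1 = (n - 1 - t) + t from by omega]
        exact prod_canonical t (n - 1 - t)
  · intro t₁ t₂ h1 h2 heq
    have hcard := congrArg Multiset.card heq
    simpa using hcard
end

section
/- On the standard filiform Lie algebra L_n (n ≥ 3), the diagonal derivation N = diag(d₁, d₂, d₁+d₂, 2d₁+d₂, …, (n−2)d₁+d₂) with d₁ = 12/(n³−3n²+2n+12) and d₂ = (n³−3n²−4n+24)/(n³−3n²+2n+12) satisfies Tr(N D) = Tr(D) for every diagonal derivation D = diag(x, y, x+y, …, (n−2)x+y). -/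
lemma sum_id_real (m : ℕ) : ∑ k ∈ Finset.Icc 1 m, (k : ℝ) = m * (m + 1) / 2 := by
  induction m with
  | zero => simp
  | succ m ih =>
      rw [Finset.sum_Icc_succ_top (by omega)]
      push_cast
      rw [ih]; ring

lemma sum_sq_real (m : ℕ) : ∑ k ∈ Finset.Icc 1 m, (k : ℝ) ^ 2 = m * (m + 1) * (2 * m + 1) / 6 := by
  induction m with
  | zero => simp
  | succ m ih =>
      rw [Finset.sum_Icc_succ_top (by omega)]
      push_cast
      rw [ih]; ring

/-- On the standard filiform Lie algebra L_n (n ≥ 3), the diagonal derivation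
`N = diag(d₁, d₂, d₁+d₂, 2d₁+d₂, …, (n−2)d₁+d₂)` with
`d₁ = 12/(n³−3n²+2n+12)` and `d₂ = (n³−3n²−4n+24)/(n³−3n²+2n+12)` satisfies
`Tr(N D) = Tr(D)` for every diagonal derivation `D = diag(x, y, x+y, …, (n−2)x+y)`. -/
theorem stmt_14 (n : ℕ) (hn : 3 ≤ n) (d₁ d₂ : ℝ)
    (hd₁ : d₁ = 12 / ((n : ℝ) ^ 3 - 3 * (n : ℝ) ^ 2 + 2 * (n : ℝ) + 12))
    (hd₂ : d₂ = ((n : ℝ) ^ 3 - 3 * (n : ℝ) ^ 2 - 4 * (n : ℝ) + 24)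
      / ((n : ℝ) ^ 3 - 3 * (n : ℝ) ^ 2 + 2 * (n : ℝ) + 12)) :
    ∀ x y : ℝ,
      d₁ * x + d₂ * y + ∑ k ∈ Finset.Icc 1 (n - 2),
        ((k : ℝ) * d₁ + d₂) * ((k : ℝ) * x + y)
      = x + y + ∑ k ∈ Finset.Icc 1 (n - 2), ((k : ℝ) * x + y) := by
  intro x y
  set m := n - 2 with hm
  have hn3 : (3 : ℝ) ≤ (n : ℝ) := by exact_mod_cast hn
  have hmn : (m : ℝ) = (n : ℝ) - 2 := by
    have : ((n - 2 : ℕ) : ℝ) = (n : ℝ) - 2 := by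
      push_cast [Nat.cast_sub (by omega : 2 ≤ n)]; ring
    simpa [hm] using this
  have hQ : (n : ℝ) ^ 3 - 3 * (n : ℝ) ^ 2 + 2 * (n : ℝ) + 12 ≠ 0 := by nlinarith
  have hcard : ∑ k ∈ Finset.Icc 1 m, (1 : ℝ) = m := by
    simp [Nat.card_Icc]
  have e1 : ∑ k ∈ Finset.Icc 1 m, ((k : ℝ) * d₁ + d₂) * ((k : ℝ) * x + y)
      = d₁ * x * (∑ k ∈ Finset.Icc 1 m, (k : ℝ) ^ 2)
        + (d₁ * y + d₂ * x) * (∑ k ∈ Finset.Icc 1 m, (k : ℝ))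
        + d₂ * y * (∑ k ∈ Finset.Icc 1 m, (1 : ℝ)) := by
    rw [Finset.mul_sum, Finset.mul_sum, Finset.mul_sum, ← Finset.sum_add_distrib,
      ← Finset.sum_add_distrib]
    exact Finset.sum_congr rfl fun k _ => by ring
  have e2 : ∑ k ∈ Finset.Icc 1 m, ((k : ℝ) * x + y)
      = x * (∑ k ∈ Finset.Icc 1 m, (k : ℝ)) + y * (∑ k ∈ Finset.Icc 1 m, (1 : ℝ)) := by
    rw [Finset.mul_sum, Finset.mul_sum, ← Finset.sum_add_distrib]
    exact Finset.sum_congr rfl fun k _ => by ring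
  rw [e1, e2, sum_id_real, sum_sq_real, hcard, hmn, hd₁, hd₂]
  have hinv := mul_inv_cancel₀ hQ
  simp only [div_eq_mul_inv]
  linear_combination (x + y + x * (((n : ℝ) - 2) * ((n : ℝ) - 2 + 1) * 2⁻¹) + y * ((n : ℝ) - 2)) * hinv
end

section
/- Let 𝔤 be a real Lie algebra with a basis {X_1,…,X_n} such that for all i,j there is at most one k with structure constant c_{ij}^k ≠ 0, and whenever c_{ij}^k ≠ 0 and c_{st}^k ≠ 0 then {i,j} = {s,t} or {i,j} ∩ {s,t} = ∅ (a 'nice basis'). Then for every derivation D of 𝔤, the diagonal part of D with respect to this basis (the linear map sending X_i to D_{ii} X_i, where D_{ii} is the i-th diagonal entry of the matrix of D) is again a derivation of 𝔤. -/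
/-- If a real Lie algebra 𝔤 has a nice basis `{X_1,…,X_n}` (at most one nonzero
structure constant `c_{ij}^k` for each pair (i,j), and the pairs producing a given k
are equal or disjoint), then for every derivation D of 𝔤 the diagonal part of D with
respect to this basis is again a derivation. -/
theorem stmt_17 (L : Type*) [LieRing L] [LieAlgebra ℝ L] (n : ℕ)
    (b : Module.Basis (Fin n) ℝ L)
    (hnice₁ : ∀ i j k l : Fin n,
      b.repr ⁅b i, b j⁆ k ≠ 0 → b.repr ⁅b i, b j⁆ l ≠ 0 → k = l)
    (hnice₂ : ∀ i j s t k : Fin n,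
      b.repr ⁅b i, b j⁆ k ≠ 0 → b.repr ⁅b s, b t⁆ k ≠ 0 →
        ({i, j} : Set (Fin n)) = {s, t} ∨ ({i, j} ∩ {s, t} : Set (Fin n)) = ∅)
    (D : L →ₗ[ℝ] L) (hD : ∀ x y : L, D ⁅x, y⁆ = ⁅D x, y⁆ + ⁅x, D y⁆) :
    ∃ E : L →ₗ[ℝ] L,
      (∀ i : Fin n, E (b i) = (b.repr (D (b i)) i) • b i) ∧
      (∀ x y : L, E ⁅x, y⁆ = ⁅E x, y⁆ + ⁅x, E y⁆) := by
  classical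
  set d : Fin n → ℝ := fun i => b.repr (D (b i)) i with hd
  set E : L →ₗ[ℝ] L := b.constr ℝ (fun i => d i • b i) with hE
  have hEb : ∀ i, E (b i) = d i • b i := fun i => b.constr_basis ℝ _ i
  let Br : L →ₗ[ℝ] L →ₗ[ℝ] L := LinearMap.mk₂ ℝ (fun x y => ⁅x, y⁆)
    add_lie smul_lie lie_add lie_smul
  -- unique nonzero coordinate: the bracket is a multiple of a single basis vector
  have hbr : ∀ i j k : Fin n, b.repr ⁅b i, b j⁆ k ≠ 0 →
      ⁅b i, b j⁆ = b.repr ⁅b i, b j⁆ k • b k := by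
    intro i j k hk
    conv_lhs => rw [← b.sum_repr ⁅b i, b j⁆]
    rw [Finset.sum_eq_single k]
    · intro l _ hl
      by_contra h
      exact hl (hnice₁ i j l k (fun h0 => h (by rw [h0, zero_smul])) hk)
    · intro h; exact absurd (Finset.mem_univ k) h
  -- key: if c_{ij}^k ≠ 0 then d k = d i + d j
  have key : ∀ i j k : Fin n, b.repr ⁅b i, b j⁆ k ≠ 0 → d k = d i + d j := by
    intro i j k hk
    set c : ℝ := b.repr ⁅b i, b j⁆ k with hc
    have hder := hD (b i) (b j)
    have hrep := congrArg (fun z => b.repr z k) hder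
    simp only [map_add, Finsupp.add_apply] at hrep
    -- left side
    have hL : b.repr (D ⁅b i, b j⁆) k = c * d k := by
      rw [hbr i j k hk, map_smul, map_smul, Finsupp.smul_apply, smul_eq_mul]
    -- first term on the right
    have h1 : b.repr ⁅D (b i), b j⁆ k = d i * c := by
      have hx : ⁅D (b i), b j⁆ = ∑ s, b.repr (D (b i)) s • ⁅b s, b j⁆ := by
        conv_lhs => rw [← b.sum_repr (D (b i))]
        show Br (∑ s, b.repr (D (b i)) s • b s) (b j) = _
        rw [map_sum, LinearMap.sum_apply]
        simp only [Br, LinearMap.mk₂_apply, map_smul, LinearMap.smul_apply]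
      rw [hx, map_sum, Finsupp.finset_sum_apply]
      simp only [map_smul, Finsupp.smul_apply, smul_eq_mul]
      rw [Finset.sum_eq_single i]
      · intro s _ hs
        by_contra h
        have hsk : b.repr ⁅b s, b j⁆ k ≠ 0 := fun h0 => h (by rw [h0, mul_zero])
        rcases hnice₂ i j s j k hk hsk with heq | hdisj
        · have hsmem : s ∈ ({i, j} : Set (Fin n)) := by
            rw [heq]; exact Set.mem_insert s {j}
          rcases hsmem with h' | h'
          · exact hs h'
          · have himem : i ∈ ({s, j} : Set (Fin n)) := by
              rw [← heq]; exact Set.mem_insert i {j}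
            rcases himem with h'' | h''
            · exact hs h''.symm
            · exact hs (h'.trans h''.symm)
        · have : j ∈ ({i, j} ∩ {s, j} : Set (Fin n)) :=
            ⟨Set.mem_insert_of_mem i rfl, Set.mem_insert_of_mem s rfl⟩
          rw [hdisj] at this
          exact this
      · intro h; exact absurd (Finset.mem_univ i) h
    -- second term on the right
    have h2 : b.repr ⁅b i, D (b j)⁆ k = d j * c := by
      have hx : ⁅b i, D (b j)⁆ = ∑ t, b.repr (D (b j)) t • ⁅b i, b t⁆ := by
        conv_lhs => rw [← b.sum_repr (D (b j))]
        show Br (b i) (∑ t, b.repr (D (b j)) t • b t) = _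
        rw [map_sum]
        simp only [Br, LinearMap.mk₂_apply, map_smul]
      rw [hx, map_sum, Finsupp.finset_sum_apply]
      simp only [map_smul, Finsupp.smul_apply, smul_eq_mul]
      rw [Finset.sum_eq_single j]
      · intro t _ ht
        by_contra h
        have htk : b.repr ⁅b i, b t⁆ k ≠ 0 := fun h0 => h (by rw [h0, mul_zero])
        rcases hnice₂ i j i t k hk htk with heq | hdisj
        · have hjmem : j ∈ ({i, t} : Set (Fin n)) := by
            rw [← heq]; exact Set.mem_insert_of_mem i rfl
          rcases hjmem with h' | h'
          · have htmem : t ∈ ({i, j} : Set (Fin n)) := by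
              rw [heq]; exact Set.mem_insert_of_mem i rfl
            rcases htmem with h'' | h''
            · exact ht (h''.trans h'.symm)
            · exact ht h''
          · exact ht h'.symm
        · have : i ∈ ({i, j} ∩ {i, t} : Set (Fin n)) :=
            ⟨Set.mem_insert i {j}, Set.mem_insert i {t}⟩
          rw [hdisj] at this
          exact this
      · intro h; exact absurd (Finset.mem_univ j) h
    rw [hL, h1, h2] at hrep
    have : c * d k = c * (d i + d j) := by ring_nf; ring_nf at hrep; linarith
    exact mul_left_cancel₀ hk this
  -- derivation on basis vectors
  have key2 : ∀ i j : Fin n, E ⁅b i, b j⁆ = (d i + d j) • ⁅b i, b j⁆ := by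
    intro i j
    by_cases h : ⁅b i, b j⁆ = 0
    · simp [h]
    · have : b.repr ⁅b i, b j⁆ ≠ 0 := fun h0 => h (by
        have := congrArg b.repr.symm h0
        simpa using this)
      obtain ⟨k, hk⟩ := Finsupp.ne_iff.mp this
      simp only [Finsupp.coe_zero, Pi.zero_apply] at hk
      rw [hbr i j k hk, map_smul, hEb k, ← key i j k hk, smul_comm]
  refine ⟨E, hEb, ?_⟩
  have hbil : ∀ x y : L, E ⁅x, y⁆ - ⁅E x, y⁆ - ⁅x, E y⁆ = 0 := by
    let F : L →ₗ[ℝ] L →ₗ[ℝ] L := LinearMap.mk₂ ℝ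
      (fun x y => E ⁅x, y⁆ - ⁅E x, y⁆ - ⁅x, E y⁆)
      (by intro x x' y; simp only [add_lie, map_add] <;> abel)
      (by intro a x y; simp only [smul_lie, map_smul, smul_sub] <;> abel)
      (by intro x y y'; simp only [lie_add, map_add] <;> abel)
      (by intro a x y; simp only [lie_smul, map_smul, smul_sub] <;> abel)
    have hF : F = 0 := by
      apply b.ext; intro i
      apply b.ext; intro j
      show E ⁅b i, b j⁆ - ⁅E (b i), b j⁆ - ⁅b i, E (b j)⁆ = _
      rw [key2 i j, hEb i, hEb j, smul_lie, lie_smul, add_smul]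
      simp <;> abel
    intro x y
    have := LinearMap.congr_fun (LinearMap.congr_fun hF x) y
    simpa [F, LinearMap.mk₂_apply] using this
  intro x y
  have := hbil x y
  rw [sub_sub, sub_eq_zero] at this
  exact this
end
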